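/- Let K be a number field of degree n and let O be an order of K (a subring of K which is a free ℤ-module of rank n). Let O_n = {α ∈ O : ℚ(α) = K}. Then Int(O_n, O) = Int(O); that is, every f ∈ K[X] with f(O_n) ⊆ O satisfies f(O) ⊆ O (O_n is polynomially dense in O). -/

import Mathlib

open Polynomial IntermediateField

-- finite difference lemma
lemma diff_lemma {K : Type*} [Field K] [CharZero K] (O : Subring K) :
    ∀ d : ℕ, ∀ g : Polynomial K, g.natDegree ≤ d → ∀ N : ℤ,
      (∀ m : ℤ, N ≤ m → g.eval (m : K) ∈ O) → ∀ m : ℤ, g.eval (m : K) ∈ O := by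
  intro d
  induction d with
  | zero =>
    intro g hg N h m
    rw [Nat.le_zero] at hg
    obtain ⟨c, rfl⟩ := Polynomial.natDegree_eq_zero.mp hg
    simpa using h N le_rfl
  | succ d ih =>
    intro g hg N h m
    by_cases h0 : g.natDegree = 0
    · obtain ⟨c, rfl⟩ := Polynomial.natDegree_eq_zero.mp h0
      simpa using h N le_rfl
    · set Δ : Polynomial K := g.comp (X + C 1) - g with hΔ
      have hΔeval : ∀ x : K, Δ.eval x = g.eval (x + 1) - g.eval x := by
        intro x; simp [hΔ]
      have hgne : g ≠ 0 := fun hgz => h0 (by simp [hgz])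
      have h1 : (g.comp (X + C 1)).natDegree = g.natDegree := by
        rw [Polynomial.natDegree_comp, Polynomial.natDegree_X_add_C, mul_one]
      have hcne : g.comp (X + C 1) ≠ 0 := fun hc => h0 (by rw [← h1, hc, Polynomial.natDegree_zero])
      have hcompdeg : (g.comp (X + C 1)).degree = g.degree := by
        rw [Polynomial.degree_eq_natDegree hcne, Polynomial.degree_eq_natDegree hgne, h1]
      have hlc : (g.comp (X + C 1)).leadingCoeff = g.leadingCoeff := by
        rw [Polynomial.leadingCoeff_comp (by rw [Polynomial.natDegree_X_add_C]; exact one_ne_zero),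
          Polynomial.leadingCoeff_X_add_C, one_pow, mul_one]
      have hdeg : Δ.degree < g.degree := by
        rw [hΔ, ← hcompdeg]
        exact Polynomial.degree_sub_lt hcompdeg hcne hlc
      have hΔnat : Δ.natDegree ≤ d := by
        by_cases hΔ0 : Δ = 0
        · simp [hΔ0]
        · have := Polynomial.natDegree_lt_natDegree hΔ0 hdeg
          omega
      have hΔO : ∀ m : ℤ, Δ.eval (m : K) ∈ O := by
        apply ih Δ hΔnat N
        intro m hm
        rw [hΔeval]
        have : ((m : K) + 1) = ((m + 1 : ℤ) : K) := by push_cast; ring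
        rw [this]
        exact sub_mem (h (m + 1) (by omega)) (h m hm)
      -- downward induction
      have key : ∀ k : ℕ, g.eval ((N - k : ℤ) : K) ∈ O := by
        intro k
        induction k with
        | zero => simpa using h N le_rfl
        | succ k ihk =>
          have e1 : g.eval (((N - k : ℤ) : K)) =
              g.eval (((N - (k+1) : ℤ) : K) + 1) := by push_cast; ring_nf
          have := hΔO (N - (k + 1))
          rw [hΔeval] at this
          have : g.eval (((N - (k+1) : ℤ) : K)) =
              g.eval (((N - k : ℤ) : K)) - Δ.eval (((N - (k+1) : ℤ) : K)) := by
            rw [hΔeval, e1]; ring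
          have hcast : (N - ((k+1:ℕ):ℤ)) = N - ((k:ℤ)+1) := by push_cast; ring
          rw [hcast, this]
          exact sub_mem ihk (hΔO _)
      rcases le_or_gt N m with hNm | hNm
      · exact h m hNm
      · have : m = N - ((N - m).toNat : ℤ) := by omega
        rw [this]; exact key _

open Polynomial IntermediateField

-- shift lemma: for primitive θ, α + m θ is primitive for all large m
lemma shift_lemma {K : Type*} [Field K] [NumberField K] (α θ : K)
    (hθ : IntermediateField.adjoin ℚ {θ} = ⊤) :
    ∃ N : ℤ, ∀ m : ℤ, N ≤ m → IntermediateField.adjoin ℚ {α + (m : K) * θ} = ⊤ := by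
  haveI : Finite (IntermediateField ℚ K) :=
    Field.finite_intermediateField_of_exists_primitive_element ℚ K ⟨θ, hθ⟩
  set F : ℤ → IntermediateField ℚ K := fun m => IntermediateField.adjoin ℚ {α + (m : K) * θ}
    with hF
  set bad : Set ℤ := {m : ℤ | F m ≠ ⊤} with hbad
  have hinj : Set.InjOn F bad := by
    intro m₁ hm₁ m₂ hm₂ heq
    by_contra hne
    have h1 : α + (m₁ : K) * θ ∈ F m₁ := IntermediateField.mem_adjoin_simple_self ℚ _
    have h2 : α + (m₂ : K) * θ ∈ F m₁ := by
      rw [heq]; exact IntermediateField.mem_adjoin_simple_self ℚ _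
    have h3 : ((m₁ : K) - (m₂ : K)) * θ ∈ F m₁ := by
      have : ((m₁ : K) - (m₂ : K)) * θ =
          (α + (m₁ : K) * θ) - (α + (m₂ : K) * θ) := by ring
      rw [this]; exact sub_mem h1 h2
    have hne' : ((m₁ : K) - (m₂ : K)) ≠ 0 := by
      rw [sub_ne_zero]
      exact fun hc => hne (by exact_mod_cast hc)
    have h4 : θ ∈ F m₁ := by
      have := mul_mem (inv_mem (sub_mem (IntermediateField.intCast_mem (F m₁) m₁)
        (IntermediateField.intCast_mem (F m₁) m₂))) h3
      rwa [inv_mul_cancel_left₀ hne'] at this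
    have : F m₁ = ⊤ := by
      rw [eq_top_iff, ← hθ]
      exact IntermediateField.adjoin_le_iff.mpr (Set.singleton_subset_iff.mpr h4)
    exact hm₁ this
  have hfin : bad.Finite :=
    Set.Finite.of_finite_image (Set.toFinite _) hinj
  obtain ⟨b, hb⟩ := hfin.bddAbove
  refine ⟨b + 1, fun m hm => ?_⟩
  by_contra hc
  have : m ∈ bad := hc
  have := hb this
  omega

-- existence of a primitive element inside O
lemma primitive_in_O (K : Type*) [Field K] [NumberField K] (n : ℕ)
    (hn : Module.finrank ℚ K = n)
    (O : Subring K) [Module.Free ℤ O] (hrank : Module.finrank ℤ O = n) :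
    ∃ θ : K, θ ∈ O ∧ IntermediateField.adjoin ℚ {θ} = ⊤ := by
  haveI : FiniteDimensional ℚ K := inferInstance
  set ι := Module.Free.ChooseBasisIndex ℤ O with hι
  set b : Module.Basis ι ℤ O := Module.Free.chooseBasis ℤ O with hbdef
  set l : O →ₗ[ℤ] K := O.subtype.toAddMonoidHom.toIntLinearMap with hl
  have hlinj : Function.Injective l := fun x y h => Subtype.ext h
  set v : ι → K := l ∘ b with hv
  have hv_int : LinearIndependent ℤ v :=
    b.linearIndependent.map' l (LinearMap.ker_eq_bot.mpr hlinj)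
  have hvQ : LinearIndependent ℚ v := (LinearIndependent.iff_fractionRing ℤ ℚ).mp hv_int
  haveI : Finite ι := hvQ.finite_of_isNoetherian
  haveI : Fintype ι := Fintype.ofFinite ι
  have hcard : Fintype.card ι = Module.finrank ℚ K := by
    rw [hn, ← hrank, Module.finrank_eq_card_basis b]
  set B : Module.Basis ι ℚ K := basisOfLinearIndependentOfCardEqFinrank hvQ hcard with hB
  have hBv : ∀ i, B i = v i := fun i =>
    congrFun (coe_basisOfLinearIndependentOfCardEqFinrank hvQ hcard) i
  obtain ⟨γ, hγ⟩ := Field.exists_primitive_element ℚ K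
  set c : ι → ℚ := fun i => B.repr γ i with hc
  obtain ⟨D, hD⟩ := IsLocalization.exist_integer_multiples_of_finite
    (nonZeroDivisors ℤ) c
  choose a ha using hD
  have hD0 : (D : ℤ) ≠ 0 := nonZeroDivisors.coe_ne_zero D
  have hDK : ((D : ℤ) : K) ≠ 0 := Int.cast_ne_zero.mpr hD0
  refine ⟨((D : ℤ) : K) * γ, ?_, ?_⟩
  · have hsum : γ = ∑ i, c i • v i := by
      conv_lhs => rw [← B.sum_repr γ]
      refine Finset.sum_congr rfl fun i _ => by rw [hBv]
    have : ((D : ℤ) : K) * γ = ∑ i, (a i) • v i := by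
      rw [hsum, Finset.mul_sum]
      refine Finset.sum_congr rfl fun i _ => ?_
      have h1 : ((D : ℤ) : K) * (c i • v i) = ((D : ℤ) • c i) • v i := by
        simp only [zsmul_eq_mul, mul_smul, Rat.smul_def]
        push_cast
        ring
      rw [h1, ← ha i]
      have h2 : (algebraMap ℤ ℚ) (a i) = ((a i : ℤ) : ℚ) := rfl
      rw [h2, Int.cast_smul_eq_zsmul ℚ]
    rw [this]
    exact sum_mem fun i _ => zsmul_mem (b i).2 _
  · apply le_antisymm
    · exact le_top
    · rw [← hγ]
      refine IntermediateField.adjoin_le_iff.mpr (Set.singleton_subset_iff.mpr ?_)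
      have hmem : ((D : ℤ) : K) * γ ∈ IntermediateField.adjoin ℚ {((D : ℤ) : K) * γ} :=
        IntermediateField.mem_adjoin_simple_self ℚ _
      have h5 := mul_mem (inv_mem (IntermediateField.intCast_mem
        (IntermediateField.adjoin ℚ {((D : ℤ) : K) * γ}) (D : ℤ))) hmem
      rwa [inv_mul_cancel_left₀ hDK] at h5

/-- Let `K` be a number field of degree `n` and let `O` be an order of `K`
(a subring of `K` which is a free `ℤ`-module of rank `n`).  Let
`O_n = {α ∈ O : ℚ(α) = K}`.  Then `Int(O_n, O) = Int(O)`: every `f ∈ K[X]` with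
`f(O_n) ⊆ O` satisfies `f(O) ⊆ O`, i.e. `O_n` is polynomially dense in `O`. -/
theorem stmt_8 (K : Type*) [Field K] [NumberField K] (n : ℕ)
    (hn : Module.finrank ℚ K = n)
    (O : Subring K) [Module.Free ℤ O] (hrank : Module.finrank ℤ O = n) :
    {f : Polynomial K | ∀ α : K, α ∈ O → IntermediateField.adjoin ℚ {α} = ⊤ →
        f.eval α ∈ O} =
      {f : Polynomial K | ∀ α : K, α ∈ O → f.eval α ∈ O} := by
  ext f
  simp only [Set.mem_setOf_eq]
  constructor
  · intro h α hα
    obtain ⟨θ, hθO, hθ⟩ := primitive_in_O K n hn O hrank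
    obtain ⟨N, hN⟩ := shift_lemma α θ hθ
    set g : Polynomial K := f.comp (C α + X * C θ) with hg
    have heval : ∀ x : K, g.eval x = f.eval (α + x * θ) := by
      intro x; simp [hg, eval_comp]; ring_nf
    have hval : ∀ m : ℤ, N ≤ m → g.eval ((m : ℤ) : K) ∈ O := by
      intro m hm
      rw [heval]
      exact h _ (add_mem hα (mul_mem (intCast_mem O m) hθO)) (hN m hm)
    have h0 := diff_lemma O g.natDegree g le_rfl N hval 0
    rw [heval] at h0
    simpa using h0
  · intro h α hα _
    exact h α hα
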